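/- Let λ > 0, a > 0, c₀, c₁ ∈ ℝ, and let f : [0,a] → ℝ be continuous. Define u : [0,a] → ℝ by u(x) = cosh(√λ x)·c₀ + (sinh(√λ x)/√λ)·c₁ + ∫₀ˣ (sinh(√λ (x−ξ))/√λ)·f(ξ) dξ. Then for every x ∈ [0,a], u(x) + u'(x)/√λ = e^{√λ x}·( c₀ + c₁/√λ + ∫₀ˣ (e^{−√λ ξ}/√λ)·f(ξ) dξ ). -/

import Mathlib

open MeasureTheory Set

/-- Exponential identity (2.2) for a single Fourier mode of the mild solution. -/
theorem stmt_1 (lam a : ℝ) (hlam : 0 < lam) (ha : 0 < a) (c₀ c₁ : ℝ)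
    (f : ℝ → ℝ) (hf : ContinuousOn f (Icc 0 a))
    (u u' : ℝ → ℝ)
    (hu : ∀ x, u x =
      Real.cosh (Real.sqrt lam * x) * c₀ +
      Real.sinh (Real.sqrt lam * x) / Real.sqrt lam * c₁ +
      ∫ ξ in (0:ℝ)..x, Real.sinh (Real.sqrt lam * (x - ξ)) / Real.sqrt lam * f ξ)
    (hu' : ∀ x ∈ Icc (0:ℝ) a, HasDerivWithinAt u (u' x) (Icc 0 a) x) :
    ∀ x ∈ Icc (0:ℝ) a,
      u x + u' x / Real.sqrt lam =
      Real.exp (Real.sqrt lam * x) *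
        (c₀ + c₁ / Real.sqrt lam +
         ∫ ξ in (0:ℝ)..x, Real.exp (-(Real.sqrt lam) * ξ) / Real.sqrt lam * f ξ) := by
  intro x hx
  set s := Real.sqrt lam with hsdef
  have hs : 0 < s := Real.sqrt_pos.2 hlam
  have hs0 : s ≠ 0 := hs.ne'
  -- extend f continuously to ℝ
  set g : ℝ → ℝ := Set.IccExtend ha.le ((Icc (0:ℝ) a).restrict f) with hgdef
  have hgcont : Continuous g := (ContinuousOn.restrict hf).Icc_extend'
  have hgeq : ∀ ξ ∈ Icc (0:ℝ) a, g ξ = f ξ := fun ξ hξ => by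
    simp [hgdef, Set.IccExtend_of_mem ha.le _ hξ]
    rfl
  have hsub : ∀ y ∈ Icc (0:ℝ) a, Set.uIcc (0:ℝ) y ⊆ Icc 0 a := fun y hy => by
    rw [Set.uIcc_of_le hy.1]
    exact Set.Icc_subset_Icc le_rfl hy.2
  -- A and B
  set A : ℝ → ℝ := fun y => ∫ ξ in (0:ℝ)..y, Real.cosh (s * ξ) * g ξ with hAdef
  set B : ℝ → ℝ := fun y => ∫ ξ in (0:ℝ)..y, Real.sinh (s * ξ) * g ξ with hBdef
  have hcA : Continuous fun ξ => Real.cosh (s * ξ) * g ξ :=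
    ((Real.continuous_cosh.comp (continuous_const.mul continuous_id))).mul hgcont
  have hcB : Continuous fun ξ => Real.sinh (s * ξ) * g ξ :=
    ((Real.continuous_sinh.comp (continuous_const.mul continuous_id))).mul hgcont
  have hA' : ∀ y, HasDerivAt A (Real.cosh (s * y) * g y) y := fun y =>
    (hcA.integral_hasStrictDerivAt 0 y).hasDerivAt
  have hB' : ∀ y, HasDerivAt B (Real.sinh (s * y) * g y) y := fun y =>
    (hcB.integral_hasStrictDerivAt 0 y).hasDerivAt
  -- u agrees on Icc with the explicit F
  set F : ℝ → ℝ := fun y => Real.cosh (s * y) * c₀ + Real.sinh (s * y) / s * c₁ +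
      (Real.sinh (s * y) * A y - Real.cosh (s * y) * B y) / s with hFdef
  have huF : ∀ y ∈ Icc (0:ℝ) a, u y = F y := by
    intro y hy
    rw [hu y]
    have h1 : (∫ ξ in (0:ℝ)..y, Real.sinh (s * (y - ξ)) / s * f ξ)
        = ∫ ξ in (0:ℝ)..y, (Real.sinh (s * y) * (Real.cosh (s * ξ) * g ξ)
            - Real.cosh (s * y) * (Real.sinh (s * ξ) * g ξ)) / s := by
      apply intervalIntegral.integral_congr
      intro ξ hξ
      dsimp only
      rw [hgeq ξ (hsub y hy hξ), show s * (y - ξ) = s * y - s * ξ by ring, Real.sinh_sub]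
      ring
    rw [h1]
    have h2 : (∫ ξ in (0:ℝ)..y, (Real.sinh (s * y) * (Real.cosh (s * ξ) * g ξ)
            - Real.cosh (s * y) * (Real.sinh (s * ξ) * g ξ)) / s)
        = (Real.sinh (s * y) * A y - Real.cosh (s * y) * B y) / s := by
      rw [intervalIntegral.integral_div, intervalIntegral.integral_sub
        ((hcA.intervalIntegrable 0 y).const_mul _) ((hcB.intervalIntegrable 0 y).const_mul _),
        intervalIntegral.integral_const_mul, intervalIntegral.integral_const_mul]
    rw [h2]
  -- derivative of F
  set D : ℝ → ℝ := fun y => s * Real.sinh (s * y) * c₀ + Real.cosh (s * y) * c₁ +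
      Real.cosh (s * y) * A y - Real.sinh (s * y) * B y with hDdef
  have hF' : ∀ y, HasDerivAt F (D y) y := by
    intro y
    have hid : HasDerivAt (fun y : ℝ => s * y) s y := by
      simpa using (hasDerivAt_id y).const_mul s
    have hc : HasDerivAt (fun y => Real.cosh (s * y)) (s * Real.sinh (s * y)) y := by
      simpa [mul_comm] using hid.cosh
    have hsh : HasDerivAt (fun y => Real.sinh (s * y)) (s * Real.cosh (s * y)) y := by
      simpa [mul_comm] using hid.sinh
    have := (((hc.mul_const c₀).add (((hsh.div_const s).mul_const c₁))).add
      ((((hsh.mul (hA' y))).sub ((hc.mul (hB' y)))).div_const s))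
    refine this.congr_deriv ?_
    rw [hDdef]
    field_simp
    ring
  -- uniqueness of derivative
  have hud : UniqueDiffWithinAt ℝ (Icc (0:ℝ) a) x := (uniqueDiffOn_Icc ha) x hx
  have huw : HasDerivWithinAt u (D x) (Icc 0 a) x :=
    ((hF' x).hasDerivWithinAt).congr (fun y hy => (huF y hy)) (huF x hx)
  have hux : u' x = D x := by
    rw [← huw.derivWithin hud, ← (hu' x hx).derivWithin hud]
  -- RHS integral
  have hR : (∫ ξ in (0:ℝ)..x, Real.exp (-s * ξ) / s * f ξ) = (A x - B x) / s := by
    have h1 : (∫ ξ in (0:ℝ)..x, Real.exp (-s * ξ) / s * f ξ)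
        = ∫ ξ in (0:ℝ)..x, (Real.cosh (s * ξ) * g ξ - Real.sinh (s * ξ) * g ξ) / s := by
      apply intervalIntegral.integral_congr
      intro ξ hξ
      dsimp only
      rw [hgeq ξ (hsub x hx hξ), show -s * ξ = -(s * ξ) by ring, ← Real.cosh_sub_sinh (s * ξ)]
      ring
    rw [h1, intervalIntegral.integral_div,
      intervalIntegral.integral_sub (hcA.intervalIntegrable 0 x) (hcB.intervalIntegrable 0 x)]
  rw [huF x hx, hux, hR, hFdef, hDdef]
  simp only [Real.cosh_eq, Real.sinh_eq]
  field_simp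
  ring
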